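/- Let p, q be distinct primes, v ≥ 1, and let P = H ⋊ ⟨d⟩ be a finite non-nilpotent group where H is a p-group, d has order q^v, d^q ∈ Z(P), C_H(d) ⊆ Z(P), and for every h ∈ H with h ∉ C_H(d) one has P = ⟨h, d⟩. Then every proper subgroup of P is nilpotent (i.e., P is a Schmidt group). -/

import Mathlib

/-- Let `p ≠ q` be primes, `v ≥ 1`, and `P = H ⋊ ⟨d⟩` a finite non-nilpotent
group with `H` a normal `p`-subgroup, `d` of order `q^v`, `d^q ∈ Z(P)`,
`C_H(d) ⊆ Z(P)`, and `P = ⟨h, d⟩` for every `h ∈ H` with `h ∉ C_H(d)`. Then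
every proper subgroup of `P` is nilpotent (so `P` is a Schmidt group). -/
theorem stmt_12 {P : Type*} [Group P] [Finite P]
    (p q : ℕ) (hp : p.Prime) (hq : q.Prime) (hpq : p ≠ q) (v : ℕ) (hv : 1 ≤ v)
    (H : Subgroup P) (hHnorm : H.Normal) (hHp : IsPGroup p H)
    (d : P) (hd : orderOf d = q ^ v)
    (hinf : H ⊓ Subgroup.zpowers d = ⊥) (hsup : H ⊔ Subgroup.zpowers d = ⊤)
    (hdq : d ^ q ∈ Subgroup.center P)
    (hnonnilp : ¬ Group.IsNilpotent P)
    (hcent : ∀ h : P, h ∈ H → h * d = d * h → h ∈ Subgroup.center P)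
    (hgen : ∀ h : P, h ∈ H → h * d ≠ d * h → Subgroup.closure {h, d} = ⊤) :
    ∀ N : Subgroup P, N ≠ ⊤ → Group.IsNilpotent N := by
  intro N hN
  haveI := Fact.mk hp
  haveI := Fact.mk hq
  set π := QuotientGroup.mk' H with hπdef
  have hdecomp : ∀ x : P, ∃ h ∈ H, ∃ k : ℤ, x = h * d ^ k := by
    intro x
    have hx : x ∈ (↑(H ⊔ Subgroup.zpowers d) : Set P) := by
      rw [hsup]; trivial
    rw [Subgroup.normal_mul] at hx
    rcases hx with ⟨h, hh, w, hw, rfl⟩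
    rcases hw with ⟨k, rfl⟩
    exact ⟨h, hh, k, rfl⟩
  have hπd : ∀ h ∈ H, ∀ k : ℤ, π (h * d ^ k) = (π d) ^ k := by
    intro h hh k
    rw [map_mul, map_zpow]
    have : π h = 1 := (QuotientGroup.eq_one_iff h).mpr hh
    rw [this, one_mul]
  have hordπd : orderOf (π d) = q ^ v := by
    have h1 : orderOf (π d) ∣ orderOf d := orderOf_map_dvd π d
    have h2 : orderOf d ∣ orderOf (π d) := by
      apply orderOf_dvd_of_pow_eq_one
      have hπ1 : π (d ^ orderOf (π d)) = 1 := by rw [map_pow, pow_orderOf_eq_one]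
      have hdH : d ^ orderOf (π d) ∈ H := (QuotientGroup.eq_one_iff _).mp hπ1
      have hmem : d ^ orderOf (π d) ∈ H ⊓ Subgroup.zpowers d :=
        ⟨hdH, ⟨(orderOf (π d) : ℤ), by simp⟩⟩
      rw [hinf] at hmem
      exact hmem
    rw [← hd]
    exact Nat.dvd_antisymm h1 h2
  have hcyc : IsCyclic (P ⧸ H) := by
    refine ⟨⟨π d, fun x => ?_⟩⟩
    obtain ⟨g, rfl⟩ := QuotientGroup.mk'_surjective H x
    obtain ⟨h, hh, k, rfl⟩ := hdecomp g
    exact ⟨k, (hπd h hh k).symm⟩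
  by_cases hcase : ∀ x ∈ N, x ∈ H → x ∈ Subgroup.center P
  · -- N is abelian
    haveI := hcyc
    let f : ↥N →* P ⧸ H := π.comp N.subtype
    have hker : f.ker ≤ Subgroup.center ↥N := by
      intro n hn
      have hnH : (n : P) ∈ H := by
        rw [MonoidHom.mem_ker, MonoidHom.comp_apply] at hn
        exact (QuotientGroup.eq_one_iff _).mp hn
      have hz := hcase (n : P) n.2 hnH
      rw [Subgroup.mem_center_iff] at hz ⊢
      intro g
      exact Subtype.ext (hz (g : P))
    letI : CommGroup ↥N := commGroupOfCyclicCenterQuotient f hker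
    exact CommGroup.isNilpotent
  · push_neg at hcase
    obtain ⟨g0, hg0N, hg0H, hg0nc⟩ := hcase
    have hcardQ : Nat.card (P ⧸ H) = q ^ v := by
      rw [← hordπd]
      refine (orderOf_eq_card_of_forall_mem_zpowers ?_).symm
      intro x
      obtain ⟨g, rfl⟩ := QuotientGroup.mk'_surjective H x
      obtain ⟨h, hh, k, rfl⟩ := hdecomp g
      exact ⟨k, (hπd h hh k).symm⟩
    obtain ⟨a, ha⟩ := (IsPGroup.iff_card).mp hHp
    have hcardP : Nat.card P = q ^ v * p ^ a := by
      rw [Subgroup.card_eq_card_quotient_mul_card_subgroup H, hcardQ, ha]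
    have hqbound : ∀ R : Subgroup P, IsPGroup q R → Nat.card R ≤ q ^ v := by
      intro R hR
      obtain ⟨m, hm⟩ := (IsPGroup.iff_card).mp hR
      have hdvd : Nat.card R ∣ Nat.card P := Subgroup.card_subgroup_dvd_card R
      rw [hm, hcardP] at hdvd
      have hcop : Nat.Coprime (q ^ m) (p ^ a) :=
        (((Nat.coprime_primes hq hp).mpr (Ne.symm hpq)).pow m a)
      have hqq : q ^ m ∣ q ^ v := Nat.Coprime.dvd_of_dvd_mul_right hcop hdvd
      rw [hm]
      exact Nat.le_of_dvd (pow_pos hq.pos v) hqq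
    have hmk : ∀ z : P, orderOf z = q ^ v →
        ∃ S : Sylow q P, (S : Subgroup P) = Subgroup.zpowers z := by
      intro z hz
      refine ⟨⟨Subgroup.zpowers z, ?_, ?_⟩, rfl⟩
      · exact IsPGroup.iff_card.mpr ⟨v, by rw [Nat.card_zpowers, hz]⟩
      · intro R hR hle
        exact (Subgroup.eq_of_le_of_card_ge hle
          (by rw [Nat.card_zpowers, hz]; exact hqbound R hR)).symm
    set M0 := H ⊔ Subgroup.zpowers (d ^ q) with hM0
    have hdqv : d ^ (q ^ v) = 1 := by rw [← hd]; exact pow_orderOf_eq_one d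
    have hπdqv : (π d) ^ (q ^ v) = 1 := by
      rw [← hordπd]; exact pow_orderOf_eq_one _
    have hNle : N ≤ M0 := by
      intro x hxN
      by_contra hxM
      apply hN
      obtain ⟨h0, hh0, k, hxeq⟩ := hdecomp x
      obtain ⟨k', hkk'⟩ : ∃ k' : ℕ, d ^ k = d ^ k' := by
        refine ⟨(k % ((q ^ v : ℕ) : ℤ)).toNat, ?_⟩
        rw [zpow_eq_zpow_emod' k hdqv, ← zpow_natCast,
          Int.toNat_of_nonneg (Int.emod_nonneg k (by exact_mod_cast (pow_pos hq.pos v).ne'))]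
      rw [hkk'] at hxeq
      have hqk' : ¬ (q ∣ k') := by
        rintro ⟨t, rfl⟩
        apply hxM
        rw [hxeq, pow_mul]
        exact Subgroup.mul_mem _ (Subgroup.mem_sup_left hh0)
          (Subgroup.mem_sup_right (Subgroup.pow_mem _ (Subgroup.mem_zpowers _) t))
      have hπx : π x = (π d) ^ k' := by
        rw [hxeq, map_mul, map_pow]
        have : π h0 = 1 := (QuotientGroup.eq_one_iff h0).mpr hh0
        rw [this, one_mul]
      have hxq : x ^ (q ^ v) ∈ H := by
        rw [← QuotientGroup.eq_one_iff (x ^ q ^ v)]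
        show π (x ^ q ^ v) = 1
        rw [map_pow, hπx, ← pow_mul, mul_comm, pow_mul, hπdqv, one_pow]
      obtain ⟨b, hb⟩ := hHp ⟨x ^ q ^ v, hxq⟩
      have hb' : (x ^ q ^ v) ^ p ^ b = 1 := by
        have := congrArg (Subgroup.subtype H) hb
        simpa using this
      set y := x ^ p ^ b with hy
      have hyq : y ^ q ^ v = 1 := by
        rw [hy, ← pow_mul, mul_comm, pow_mul]
        exact hb'
      have hyN : y ∈ N := Subgroup.pow_mem N hxN _
      have hπy : π y = (π d) ^ (k' * p ^ b) := by
        rw [hy, map_pow, hπx, ← pow_mul]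
      have hcopq : Nat.Coprime (q ^ v) (k' * p ^ b) := by
        have h1 : Nat.Coprime q k' := (hq.coprime_iff_not_dvd).mpr hqk'
        have h2 : Nat.Coprime q (p ^ b) :=
          Nat.Coprime.pow_right b ((Nat.coprime_primes hq hp).mpr (Ne.symm hpq))
        exact Nat.Coprime.pow_left v (h1.mul_right h2)
      have hordy : orderOf y = q ^ v := by
        refine Nat.dvd_antisymm (orderOf_dvd_of_pow_eq_one hyq) ?_
        have h1 : (π d) ^ (k' * p ^ b * orderOf y) = 1 := by
          rw [pow_mul, ← hπy, ← map_pow, pow_orderOf_eq_one, map_one]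
        have h2 : q ^ v ∣ k' * p ^ b * orderOf y := by
          rw [← hordπd]; exact orderOf_dvd_of_pow_eq_one h1
        rw [mul_comm] at h2
        exact hcopq.dvd_of_dvd_mul_right h2
      obtain ⟨Sy, hSy⟩ := hmk y hordy
      obtain ⟨Sd, hSd⟩ := hmk d hd
      obtain ⟨c, hc⟩ := MulAction.exists_smul_eq P Sy Sd
      have hy' : y ∈ (Sy : Subgroup P) := by
        rw [hSy]; exact Subgroup.mem_zpowers y
      have hcy : c * y * c⁻¹ ∈ Subgroup.zpowers d := by
        rw [← hSd, ← hc, Sylow.coe_subgroup_smul,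
          Subgroup.mem_pointwise_smul_iff_inv_smul_mem]
        simpa [MulAut.smul_def, mul_assoc] using hy'
      have hsemi : SemiconjBy c y (c * y * c⁻¹) := by
        unfold SemiconjBy
        group
      have hordcy : orderOf (c * y * c⁻¹) = q ^ v :=
        ((hsemi.orderOf_eq c).symm).trans hordy
      have hzeq : Subgroup.zpowers (c * y * c⁻¹) = Subgroup.zpowers d := by
        apply Subgroup.eq_of_le_of_card_ge (Subgroup.zpowers_le.mpr hcy)
        rw [Nat.card_zpowers, Nat.card_zpowers, hordcy, hd]
      have hdmem : d ∈ Subgroup.zpowers (c * y * c⁻¹) := by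
        rw [hzeq]; exact Subgroup.mem_zpowers d
      obtain ⟨m, hm⟩ := hdmem
      have hdc : c⁻¹ * d * c ∈ N := by
        have he : c⁻¹ * d * c = y ^ m := by
          rw [← hm]
          show c⁻¹ * (c * y * c⁻¹) ^ m * c = y ^ m
          rw [conj_zpow]
          group
        rw [he]
        exact Subgroup.zpow_mem N hyN m
      have hH' : c * g0 * c⁻¹ ∈ H := hHnorm.conj_mem g0 hg0H c
      have hnc : (c * g0 * c⁻¹) * d ≠ d * (c * g0 * c⁻¹) := by
        intro hco
        apply hg0nc
        have hz := hcent _ hH' hco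
        have hzc : c⁻¹ * (c * g0 * c⁻¹) * c = c * g0 * c⁻¹ := by
          calc c⁻¹ * (c * g0 * c⁻¹) * c = (c * g0 * c⁻¹) * c⁻¹ * c := by
                rw [Subgroup.mem_center_iff.mp hz c⁻¹]
            _ = c * g0 * c⁻¹ := by group
        have hg : g0 = c⁻¹ * (c * g0 * c⁻¹) * c := by group
        rw [hg, hzc]
        exact hz
      have htop := hgen _ hH' hnc
      have hmap := congrArg (Subgroup.map (MulAut.conj c⁻¹).toMonoidHom) htop
      rw [MonoidHom.map_closure, Subgroup.map_top_of_surjective _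
        (MulEquiv.surjective _), Set.image_pair] at hmap
      have h1 : (MulAut.conj c⁻¹).toMonoidHom (c * g0 * c⁻¹) = g0 := by
        simp [MulAut.conj_apply, mul_assoc]
      have h2 : (MulAut.conj c⁻¹).toMonoidHom d = c⁻¹ * d * c := by
        simp [MulAut.conj_apply, mul_assoc]
      rw [h1, h2] at hmap
      have hle : Subgroup.closure {g0, c⁻¹ * d * c} ≤ N := by
        rw [Subgroup.closure_le]
        intro t ht
        simp only [Set.mem_insert_iff, Set.mem_singleton_iff] at ht
        rcases ht with rfl | rfl
        · exact hg0N
        · exact hdc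
      exact top_le_iff.mp (hmap ▸ hle)
    haveI hHnil : Group.IsNilpotent ↥H := hHp.isNilpotent
    have hcomm : ∀ (m : ↥H) (n : ↥(Subgroup.zpowers (d ^ q))),
        Commute (H.subtype m) ((Subgroup.zpowers (d ^ q)).subtype n) := by
      intro m n
      have hz : (n : P) ∈ Subgroup.center P := Subgroup.zpowers_le.mpr hdq n.2
      exact Subgroup.mem_center_iff.mp hz (m : P)
    let φ := MonoidHom.noncommCoprod H.subtype (Subgroup.zpowers (d ^ q)).subtype hcomm
    have hφr : φ.range = M0 := by
      apply le_antisymm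
      · rintro _ ⟨⟨m, n⟩, rfl⟩
        exact Subgroup.mul_mem _ (Subgroup.mem_sup_left m.2) (Subgroup.mem_sup_right n.2)
      · rw [hM0, sup_le_iff]
        constructor
        · intro h hh
          exact ⟨(⟨h, hh⟩, 1), by simp [φ, MonoidHom.noncommCoprod_apply]⟩
        · intro z hz
          exact ⟨(1, ⟨z, hz⟩), by simp [φ, MonoidHom.noncommCoprod_apply]⟩
    haveI hM0nil : Group.IsNilpotent ↥M0 := by
      rw [← hφr]
      haveI : Group.IsNilpotent ↥(Subgroup.zpowers (d ^ q)) := by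
        letI := IsCyclic.commGroup (α := ↥(Subgroup.zpowers (d ^ q)))
        exact CommGroup.isNilpotent
      exact nilpotent_of_surjective φ.rangeRestrict φ.rangeRestrict_surjective
    exact (Group.isNilpotent_congr (Subgroup.subgroupOfEquivOfLe hNle)).mp inferInstance
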